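/- Let F : ℝ → ℝ be a Schwartz function with ∫_ℝ F(χ) dχ = 0. Then ∫_ℝ ∫_ℝ F(χ) F(χ') log|χ − χ'| dχ dχ' ≤ 0. -/

import Mathlib

open MeasureTheory Real Set

lemma exp_slice {a b : ℝ} (hab : a ≤ b) (t : ℝ) (ht : 0 < t) :
    ∫ s in Ioc a b, Real.exp (-(s*t)) = (Real.exp (-(a*t)) - Real.exp (-(b*t))) / t := by
  rw [← intervalIntegral.integral_of_le hab]
  have h2 : ∀ s : ℝ, Real.exp (-(s*t)) = (fun x => Real.exp (-x)) (t * s) := by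
    intro s; simp [mul_comm]
  simp_rw [h2]
  have h3 := intervalIntegral.smul_integral_comp_mul_left (fun x => Real.exp (-x)) t (a := a) (b := b)
  have h4 : ∫ x in t*a..t*b, Real.exp (-x) = Real.exp (-(a*t)) - Real.exp (-(b*t)) := by
    rw [intervalIntegral.integral_comp_neg Real.exp, integral_exp]
    ring_nf
  rw [h4] at h3
  have := congrArg (fun y => t⁻¹ • y) h3
  simp only [smul_smul, inv_mul_cancel₀ ht.ne', one_smul, smul_eq_mul] at this
  rw [inv_mul_cancel_left₀ ht.ne'] at this
  rw [this, div_eq_inv_mul, mul_comm a t, mul_comm b t]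

lemma exp_diff_bounds {u v : ℝ} (hu : 0 ≤ u) (huv : u ≤ v) :
    0 ≤ Real.exp (-u) - Real.exp (-v) ∧
      Real.exp (-u) - Real.exp (-v) ≤ (v - u) * Real.exp (-u) := by
  have h1 : Real.exp (-v) ≤ Real.exp (-u) := Real.exp_le_exp.mpr (by linarith)
  have h3 : Real.exp (-v) = Real.exp (-u) * Real.exp (-(v-u)) := by
    rw [← Real.exp_add]; ring_nf
  have h2 := Real.add_one_le_exp (-(v-u))
  have h4 := Real.exp_pos (-u)
  constructor
  · linarith
  · nlinarith

lemma frullani {a b : ℝ} (ha : 0 < a) (hab : a ≤ b) :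
    IntegrableOn (fun t => (Real.exp (-(a*t)) - Real.exp (-(b*t))) / t) (Ioi 0) ∧
    (∫ t in Ioi 0, (Real.exp (-(a*t)) - Real.exp (-(b*t))) / t)
      = Real.log b - Real.log a := by
  have hb : 0 < b := lt_of_lt_of_le ha hab
  set μ := volume.restrict (Ioi (0:ℝ)) with hμ
  set ν := volume.restrict (Ioc a b) with hν
  have hcont : Continuous (Function.uncurry fun (t s : ℝ) => Real.exp (-(s*t))) := by
    apply Real.continuous_exp.comp
    exact (continuous_snd.mul continuous_fst).neg
  have hmeas : AEStronglyMeasurable (Function.uncurry fun (t s : ℝ) => Real.exp (-(s*t)))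
      (μ.prod ν) := hcont.aestronglyMeasurable
  have hsec : ∀ᵐ t ∂μ, Integrable (fun s => Real.exp (-(s*t))) ν := by
    filter_upwards with t
    exact (Continuous.integrableOn_Ioc (by continuity))
  have hbound : ∀ᵐ t ∂μ, ‖∫ s, ‖Real.exp (-(s*t))‖ ∂ν‖ ≤ (b-a) * Real.exp (-(a*t)) := by
    rw [hμ, ae_restrict_iff' measurableSet_Ioi]
    filter_upwards with t ht
    have hnn : 0 ≤ ∫ s, ‖Real.exp (-(s*t))‖ ∂ν := integral_nonneg fun s => norm_nonneg _
    rw [Real.norm_eq_abs, abs_of_nonneg hnn]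
    have hle : ∫ s, ‖Real.exp (-(s*t))‖ ∂ν ≤ ∫ _ in Ioc a b, Real.exp (-(a*t)) := by
      rw [hν]
      apply setIntegral_mono_on
      · exact (Continuous.integrableOn_Ioc (by continuity)).norm
      · exact integrableOn_const measure_Ioc_lt_top.ne
      · exact measurableSet_Ioc
      · intro s hs
        rw [Real.norm_eq_abs, abs_of_pos (Real.exp_pos _)]
        apply Real.exp_le_exp.mpr
        have := hs.1
        nlinarith [le_of_lt (mem_Ioi.mp ht)]
    refine hle.trans ?_
    rw [setIntegral_const, smul_eq_mul, Real.volume_real_Ioc_of_le hab]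
  have hInt : Integrable (Function.uncurry fun (t s : ℝ) => Real.exp (-(s*t))) (μ.prod ν) := by
    rw [integrable_prod_iff hmeas]
    refine ⟨hsec, ?_⟩
    have hg : Integrable (fun t => (b-a) * Real.exp (-(a*t))) μ := by
      have := (exp_neg_integrableOn_Ioi 0 ha).const_mul (b-a)
      simpa [neg_mul] using this
    refine Integrable.mono hg hmeas.norm.integral_prod_right' ?_
    refine hbound.mono fun t h => h.trans ?_
    exact le_abs_self _
  have hswap := integral_integral_swap hInt
  have hLHS : (∫ t, ∫ s, Real.exp (-(s*t)) ∂ν ∂μ)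
      = ∫ t in Ioi 0, (Real.exp (-(a*t)) - Real.exp (-(b*t))) / t := by
    rw [hμ, hν]
    apply setIntegral_congr_ae measurableSet_Ioi
    filter_upwards with t ht
    exact exp_slice hab t ht
  have hRHS : (∫ s, ∫ t, Real.exp (-(s*t)) ∂μ ∂ν) = Real.log b - Real.log a := by
    rw [hν, hμ]
    have h1 : ∀ s ∈ Ioc a b, (∫ t in Ioi (0:ℝ), Real.exp (-(s*t))) = s⁻¹ := by
      intro s hs
      have hs0 : 0 < s := lt_of_lt_of_le ha hs.1.le
      have h2 := integral_comp_mul_left_Ioi (fun x => Real.exp (-x)) 0 hs0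
      simp only [mul_zero, integral_exp_neg_Ioi_zero, smul_eq_mul, mul_one] at h2
      exact h2
    rw [setIntegral_congr_fun measurableSet_Ioc h1, ← intervalIntegral.integral_of_le hab,
      integral_inv_of_pos ha hb, Real.log_div hb.ne' ha.ne']
  have hIntOn : IntegrableOn (fun t => (Real.exp (-(a*t)) - Real.exp (-(b*t))) / t) (Ioi 0) := by
    have := hInt.integral_prod_left
    apply this.congr
    rw [hμ, Filter.EventuallyEq, ae_restrict_iff' measurableSet_Ioi]
    filter_upwards with t ht
    exact exp_slice hab t ht
  exact ⟨hIntOn, by rw [← hLHS, hswap, hRHS]⟩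

lemma frullani_log {r : ℝ} (hr : 0 < r) :
    IntegrableOn (fun t => (Real.exp (-t) - Real.exp (-(t*r))) / t) (Ioi 0) ∧
    (∫ t in Ioi 0, (Real.exp (-t) - Real.exp (-(t*r))) / t) = Real.log r ∧
    (∫ t in Ioi 0, ‖(Real.exp (-t) - Real.exp (-(t*r))) / t‖) = |Real.log r| := by
  rcases le_or_gt 1 r with h | h
  · have H := frullani one_pos h
    have hfun : (fun t : ℝ => (Real.exp (-(1*t)) - Real.exp (-(r*t))) / t)
        = fun t => (Real.exp (-t) - Real.exp (-(t*r))) / t := by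
      funext t; rw [one_mul, mul_comm r t]
    rw [hfun] at H
    obtain ⟨Hi, Hv⟩ := H
    rw [Real.log_one, sub_zero] at Hv
    refine ⟨Hi, Hv, ?_⟩
    have habs : ∀ t ∈ Ioi (0:ℝ), ‖(Real.exp (-t) - Real.exp (-(t*r))) / t‖
        = (Real.exp (-t) - Real.exp (-(t*r))) / t := by
      intro t ht
      have ht0 := mem_Ioi.mp ht
      rw [Real.norm_eq_abs, abs_of_nonneg]
      apply div_nonneg _ ht0.le
      have := (exp_diff_bounds (u := t) (v := t*r) ht0.le (by nlinarith)).1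
      linarith
    rw [setIntegral_congr_fun measurableSet_Ioi habs, Hv,
      abs_of_nonneg (Real.log_nonneg h)]
  · have H := frullani hr h.le
    have hfun : (fun t : ℝ => (Real.exp (-(r*t)) - Real.exp (-(1*t))) / t)
        = fun t => -((Real.exp (-t) - Real.exp (-(t*r))) / t) := by
      funext t; rw [one_mul, mul_comm r t]; ring
    rw [hfun] at H
    obtain ⟨Hi, Hv⟩ := H
    rw [Real.log_one, zero_sub] at Hv
    have Hi' : IntegrableOn (fun t => (Real.exp (-t) - Real.exp (-(t*r))) / t) (Ioi 0) := by
      have := Hi.neg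
      simp only [Pi.neg_def, neg_neg] at this
      exact this
    have Hv' : (∫ t in Ioi 0, (Real.exp (-t) - Real.exp (-(t*r))) / t) = Real.log r := by
      rw [integral_neg] at Hv; linarith
    refine ⟨Hi', Hv', ?_⟩
    have habs : ∀ t ∈ Ioi (0:ℝ), ‖(Real.exp (-t) - Real.exp (-(t*r))) / t‖
        = -((Real.exp (-t) - Real.exp (-(t*r))) / t) := by
      intro t ht
      have ht0 := mem_Ioi.mp ht
      rw [Real.norm_eq_abs, abs_of_nonpos]
      apply div_nonpos_of_nonpos_of_nonneg _ ht0.le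
      have := (exp_diff_bounds (u := t*r) (v := t) (by nlinarith) (by nlinarith)).1
      linarith
    rw [setIntegral_congr_fun measurableSet_Ioi habs, integral_neg, Hv',
      abs_of_neg (Real.log_neg hr h)]

lemma abs_log_le_two_div_sqrt {u : ℝ} (h0 : 0 < u) (h1 : u ≤ 1) :
    |Real.log u| ≤ 2 / Real.sqrt u := by
  have hs : 0 < Real.sqrt u := Real.sqrt_pos.mpr h0
  rw [abs_of_nonpos (Real.log_nonpos h0.le h1)]
  have hlog : Real.log u = 2 * Real.log (Real.sqrt u) := by
    rw [Real.log_sqrt h0.le]; ring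
  have h2 := Real.log_le_sub_one_of_pos (inv_pos.mpr hs)
  rw [Real.log_inv] at h2
  rw [hlog, div_eq_mul_inv]
  have : (Real.sqrt u)⁻¹ - 1 ≤ (Real.sqrt u)⁻¹ := by linarith
  nlinarith [inv_pos.mpr hs]

lemma integrableOn_abs_log_Ioc : IntegrableOn (fun u => |Real.log u|) (Ioc (0:ℝ) 1) := by
  have hrp : IntegrableOn (fun u : ℝ => u ^ (-(1/2) : ℝ)) (Ioc (0:ℝ) 1) := by
    have := intervalIntegral.intervalIntegrable_rpow' (a := 0) (b := 1)
      (r := (-(1/2) : ℝ)) (by norm_num)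
    rwa [intervalIntegrable_iff_integrableOn_Ioc_of_le (by norm_num)] at this
  refine Integrable.mono (hrp.const_mul 2) ?_ ?_
  · exact (Real.measurable_log.abs).aestronglyMeasurable
  · rw [ae_restrict_iff' measurableSet_Ioc]
    filter_upwards with u hu
    have h0 := hu.1
    have h1 := hu.2
    rw [Real.norm_eq_abs, abs_abs, Real.norm_eq_abs]
    refine (abs_log_le_two_div_sqrt h0 h1).trans ?_
    rw [Real.sqrt_eq_rpow, div_eq_mul_inv, ← Real.rpow_neg h0.le]
    exact le_abs_self _

/-- the cut-off function `g u = |log u|` for `|u| ≤ 1`, else `0`. -/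
noncomputable def logcut : ℝ → ℝ := (Icc (-1:ℝ) 1).indicator (fun u => |Real.log u|)

lemma logcut_nonneg (u : ℝ) : 0 ≤ logcut u := by
  unfold logcut
  by_cases h : u ∈ Icc (-1:ℝ) 1 <;> simp [h, abs_nonneg]

lemma logcut_measurable : Measurable logcut :=
  (Real.measurable_log.abs).indicator measurableSet_Icc

lemma logcut_integrable : Integrable logcut := by
  unfold logcut
  rw [integrable_indicator_iff measurableSet_Icc]
  have hsplit : Icc (-1:ℝ) 1 = Ico (-1:ℝ) 0 ∪ (Icc (0:ℝ) 1) := by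
    ext u; simp only [mem_Icc, mem_Ico, mem_union]
    constructor
    · rintro ⟨h1, h2⟩
      rcases lt_or_ge u 0 with h | h
      · exact Or.inl ⟨h1, h⟩
      · exact Or.inr ⟨h, h2⟩
    · rintro (⟨h1, h2⟩ | ⟨h1, h2⟩) <;> constructor <;> linarith
  rw [hsplit]
  apply IntegrableOn.union
  · -- negative part via neg symmetry
    have hpos : IntegrableOn (fun u => |Real.log u|) (Ioc (0:ℝ) 1) := integrableOn_abs_log_Ioc
    have hind : Integrable ((Ioc (0:ℝ) 1).indicator (fun u => |Real.log u|)) := by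
      rwa [integrable_indicator_iff measurableSet_Ioc]
    have hneg := hind.comp_neg
    have hkey : (fun u => ((Ioc (0:ℝ) 1).indicator (fun v => |Real.log v|)) (-u))
        = (Ico (-1:ℝ) 0).indicator (fun u => |Real.log u|) := by
      funext u
      by_cases h : u ∈ Ico (-1:ℝ) 0
      · have h' : -u ∈ Ioc (0:ℝ) 1 := by
          obtain ⟨h1, h2⟩ := h
          constructor <;> [linarith; linarith]
        rw [indicator_of_mem h' , indicator_of_mem h]
        rw [show Real.log (-u) = Real.log u by rw [← Real.log_abs, abs_neg, Real.log_abs]]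
      · have h' : -u ∉ Ioc (0:ℝ) 1 := by
          simp only [mem_Ico, not_and, not_lt] at h
          simp only [mem_Ioc, not_and, not_le]
          intro hu
          by_contra hc
          push_neg at hc
          have : -1 ≤ u := by linarith
          have := h this
          linarith
        rw [indicator_of_notMem h', indicator_of_notMem h]
    rw [hkey] at hneg
    rwa [integrable_indicator_iff measurableSet_Ico] at hneg
  · -- Icc 0 1 = {0} ∪ Ioc 0 1, and log 0 = 0
    have h0 : IntegrableOn (fun u => |Real.log u|) (Ioc (0:ℝ) 1) := integrableOn_abs_log_Ioc
    apply h0.mono_set_ae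
    unfold Filter.EventuallyLE
    rw [ae_iff]
    have : {u : ℝ | ¬ (u ∈ Icc (0:ℝ) 1 → u ∈ Ioc (0:ℝ) 1)} ⊆ {0} := by
      intro u hu
      simp only [mem_setOf_eq, _root_.not_imp, mem_Icc, mem_Ioc, not_and, not_le] at hu
      obtain ⟨⟨h1, h2⟩, h3⟩ := hu
      rcases eq_or_lt_of_le h1 with h | h
      · simp [← h]
      · exact absurd (h3 h) (by linarith)
    exact measure_mono_null this (by simp)

lemma schwartz_log_integrable (F : SchwartzMap ℝ ℝ) :
    Integrable (fun p : ℝ×ℝ => F p.1 * F p.2 * Real.log |p.1 - p.2|)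
      ((volume : Measure ℝ).prod volume) := by
  obtain ⟨C, hC⟩ := F.decay' 0 0
  have hC' : ∀ x : ℝ, ‖F x‖ ≤ C := by
    intro x
    have := hC x
    simp [norm_iteratedFDeriv_zero] at this
    exact this
  have hC0 : 0 ≤ C := le_trans (norm_nonneg _) (hC' 0)
  have hFc : Continuous F := F.continuous
  have hF1 : Integrable (fun x : ℝ => F x) := F.integrable
  have hFx : Integrable (fun x : ℝ => ‖x‖ * ‖F x‖) := by
    have := F.integrable_pow_mul (volume : Measure ℝ) 1
    simpa using this
  -- measurability of the target
  have hmeas : AEStronglyMeasurable (fun p : ℝ×ℝ => F p.1 * F p.2 * Real.log |p.1 - p.2|)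
      ((volume : Measure ℝ).prod volume) := by
    apply AEStronglyMeasurable.mul
    · exact ((hFc.comp continuous_fst).mul (hFc.comp continuous_snd)).aestronglyMeasurable
    · exact (Real.measurable_log.comp
        ((continuous_fst.sub continuous_snd).abs).measurable).aestronglyMeasurable
  -- the three majorant pieces
  have hM1 : Integrable (fun p : ℝ×ℝ => (‖p.1‖ * ‖F p.1‖) * ‖F p.2‖)
      ((volume : Measure ℝ).prod volume) := hFx.mul_prod hF1.norm
  have hM2 : Integrable (fun p : ℝ×ℝ => ‖F p.1‖ * (‖p.2‖ * ‖F p.2‖))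
      ((volume : Measure ℝ).prod volume) := hF1.norm.mul_prod hFx
  have hM3 : Integrable (fun p : ℝ×ℝ => ‖F p.1‖ * logcut (p.1 - p.2))
      ((volume : Measure ℝ).prod volume) := by
    have hm3 : AEStronglyMeasurable (fun p : ℝ×ℝ => ‖F p.1‖ * logcut (p.1 - p.2))
        ((volume : Measure ℝ).prod volume) := by
      apply AEStronglyMeasurable.mul
      · exact (hFc.norm.comp continuous_fst).aestronglyMeasurable
      · exact (logcut_measurable.comp
          (continuous_fst.sub continuous_snd).measurable).aestronglyMeasurable
    rw [integrable_prod_iff hm3]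
    constructor
    · filter_upwards with x
      exact (logcut_integrable.comp_sub_left x).const_mul _
    · have hkey : (fun x : ℝ => ∫ y, ‖(‖F x‖) * logcut (x - y)‖)
          = fun x => ‖F x‖ * (∫ u, logcut u) := by
        funext x
        have h1 : ∀ y : ℝ, ‖(‖F x‖) * logcut (x - y)‖ = ‖F x‖ * logcut (x - y) := by
          intro y
          rw [Real.norm_eq_abs, abs_of_nonneg (mul_nonneg (norm_nonneg _) (logcut_nonneg _))]
        simp_rw [h1]
        rw [integral_const_mul, integral_sub_left_eq_self logcut volume x]
      rw [hkey]
      exact hF1.norm.mul_const _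
  have hM : Integrable (fun p : ℝ×ℝ =>
      (‖p.1‖ * ‖F p.1‖) * ‖F p.2‖ + ‖F p.1‖ * (‖p.2‖ * ‖F p.2‖)
        + C * (‖F p.1‖ * logcut (p.1 - p.2))) ((volume : Measure ℝ).prod volume) :=
    (hM1.add hM2).add (hM3.const_mul C)
  refine Integrable.mono hM hmeas ?_
  filter_upwards with p
  set x := p.1; set y := p.2
  have hMnn : 0 ≤ (‖x‖ * ‖F x‖) * ‖F y‖ + ‖F x‖ * (‖y‖ * ‖F y‖)
      + C * (‖F x‖ * logcut (x - y)) := by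
    have h3 := mul_nonneg hC0 (mul_nonneg (norm_nonneg (F x)) (logcut_nonneg (x - y)))
    have h1 : (0:ℝ) ≤ (‖x‖ * ‖F x‖) * ‖F y‖ := by positivity
    have h2 : (0:ℝ) ≤ ‖F x‖ * (‖y‖ * ‖F y‖) := by positivity
    linarith
  rw [Real.norm_eq_abs ((‖x‖ * ‖F x‖) * ‖F y‖ + _ + _), abs_of_nonneg hMnn]
  rcases le_or_gt |x - y| 1 with h | h
  · -- small distance: use logcut
    have hmem : x - y ∈ Icc (-1:ℝ) 1 := abs_le.mp h
    have hlc : logcut (x - y) = |Real.log (|x - y|)| := by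
      unfold logcut
      rw [indicator_of_mem hmem, Real.log_abs]
    have hnn : ‖F x * F y * Real.log |x - y|‖ = ‖F x‖ * ‖F y‖ * |Real.log (|x - y|)| := by
      rw [norm_mul, norm_mul]; rfl
    rw [hnn]
    have hb : ‖F x‖ * ‖F y‖ * |Real.log (|x - y|)| ≤ C * (‖F x‖ * logcut (x - y)) := by
      rw [hlc]
      calc ‖F x‖ * ‖F y‖ * |Real.log (|x - y|)|
          = ‖F y‖ * (‖F x‖ * |Real.log (|x - y|)|) := by ring
        _ ≤ C * (‖F x‖ * |Real.log (|x - y|)|) :=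
            mul_le_mul_of_nonneg_right (hC' y) (by positivity)
    nlinarith [mul_nonneg (mul_nonneg (norm_nonneg x) (norm_nonneg (F x))) (norm_nonneg (F y)),
      mul_nonneg (norm_nonneg (F x)) (mul_nonneg (norm_nonneg y) (norm_nonneg (F y)))]
  · -- large distance: log ≤ |x| + |y|
    have hlog0 : 0 ≤ Real.log |x - y| := Real.log_nonneg h.le
    have hlogle : Real.log |x - y| ≤ ‖x‖ + ‖y‖ := by
      refine (Real.log_le_self (abs_nonneg _)).trans ?_
      have := abs_add_le x (-y)
      simp only [← sub_eq_add_neg, abs_neg] at this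
      simpa [Real.norm_eq_abs] using this
    have hnn : ‖F x * F y * Real.log |x - y|‖ = ‖F x‖ * ‖F y‖ * |Real.log (|x - y|)| := by
      rw [norm_mul, norm_mul]; rfl
    rw [hnn, abs_of_nonneg hlog0]
    have hb : ‖F x‖ * ‖F y‖ * Real.log |x - y| ≤
        (‖x‖ * ‖F x‖) * ‖F y‖ + ‖F x‖ * (‖y‖ * ‖F y‖) := by
      have h1 : ‖F x‖ * ‖F y‖ * Real.log |x - y| ≤ ‖F x‖ * ‖F y‖ * (‖x‖ + ‖y‖) := by
        apply mul_le_mul_of_nonneg_left hlogle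
        positivity
      nlinarith
    nlinarith [mul_nonneg (mul_nonneg hC0 (norm_nonneg (F x))) (logcut_nonneg (x - y))]

lemma gauss_quad_nonneg (F : SchwartzMap ℝ ℝ) {t : ℝ} (ht : 0 < t) :
    0 ≤ ∫ p : ℝ×ℝ, F p.1 * F p.2 * Real.exp (-(t * (p.1 - p.2)^2))
        ∂((volume : Measure ℝ).prod volume) := by
  have hFc : Continuous F := F.continuous
  have hF1 : Integrable (fun x : ℝ => F x) := F.integrable
  set c : ℝ := 2*t with hcdef
  have hc : 0 < c := by positivity
  set K : ℝ := Real.sqrt (π / (2*c)) with hKdef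
  have hK : 0 < K := Real.sqrt_pos.mpr (by positivity)
  have hg : Integrable (fun z : ℝ => Real.exp (-(c * z^2))) := by
    simpa [neg_mul] using integrable_exp_neg_mul_sq hc
  have hgz : ∀ x : ℝ, Integrable (fun z : ℝ => Real.exp (-(c * (x - z)^2))) := fun x =>
    hg.comp_sub_left x
  have hzint : ∀ x y : ℝ, (∫ z : ℝ, Real.exp (-(c*(x-z)^2)) * Real.exp (-(c*(y-z)^2)))
      = K * Real.exp (-(t * (x-y)^2)) := by
    intro x y
    have hid : ∀ z : ℝ, Real.exp (-(c*(x-z)^2)) * Real.exp (-(c*(y-z)^2))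
        = Real.exp (-(2*c * (z - (x+y)/2)^2)) * Real.exp (-(t * (x-y)^2)) := by
      intro z
      rw [← Real.exp_add, ← Real.exp_add]
      congr 1
      rw [hcdef]; ring
    simp_rw [hid]
    rw [integral_mul_const]
    congr 1
    calc (∫ z : ℝ, Real.exp (-(2*c * (z - (x+y)/2)^2)))
        = ∫ z : ℝ, Real.exp (-(2*c * z^2)) :=
          integral_sub_right_eq_self (fun u => Real.exp (-(2*c * u^2))) ((x+y)/2)
      _ = K := by simpa [neg_mul] using integral_gaussian (2*c)
  set f : (ℝ×ℝ) → ℝ → ℝ := fun p z =>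
    (F p.1 * Real.exp (-(c*(p.1-z)^2))) * (F p.2 * Real.exp (-(c*(p.2-z)^2))) with hfdef
  have hfcont : Continuous (Function.uncurry f) := by
    apply Continuous.mul
    · apply Continuous.mul
      · exact hFc.comp (continuous_fst.comp continuous_fst)
      · apply Real.continuous_exp.comp
        apply Continuous.neg
        exact (continuous_const.mul
          ((((continuous_fst.comp continuous_fst)).sub continuous_snd).pow 2))
    · apply Continuous.mul
      · exact hFc.comp (continuous_snd.comp continuous_fst)
      · apply Real.continuous_exp.comp
        apply Continuous.neg
        exact (continuous_const.mul
          ((((continuous_snd.comp continuous_fst)).sub continuous_snd).pow 2))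
  have hfmeas : AEStronglyMeasurable (Function.uncurry f)
      (((volume : Measure ℝ).prod volume).prod volume) := hfcont.aestronglyMeasurable
  have hnormf : ∀ p : ℝ×ℝ, ∀ z : ℝ, ‖f p z‖
      = (‖F p.1‖ * ‖F p.2‖) * (Real.exp (-(c*(p.1-z)^2)) * Real.exp (-(c*(p.2-z)^2))) := by
    intro p z
    rw [hfdef]
    simp only [norm_mul, Real.norm_eq_abs, abs_of_pos (Real.exp_pos _)]
    ring
  have hfInt : Integrable (Function.uncurry f)
      (((volume : Measure ℝ).prod volume).prod volume) := by
    rw [integrable_prod_iff hfmeas]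
    constructor
    · filter_upwards with p
      have hmeasz : AEStronglyMeasurable (fun z => f p z) volume := by
        have : Continuous (fun z => f p z) := hfcont.comp (Continuous.prodMk_right p)
        exact this.aestronglyMeasurable
      refine Integrable.mono (((hgz p.1).const_mul (‖F p.1‖ * ‖F p.2‖))) hmeasz ?_
      filter_upwards with z
      simp only [Function.uncurry_apply_pair]
      have he2 : Real.exp (-(c*(p.2-z)^2)) ≤ 1 := Real.exp_le_one_iff.mpr (by
        have : (0:ℝ) ≤ c*(p.2-z)^2 := by positivity
        linarith)
      have he1 : 0 < Real.exp (-(c*(p.1-z)^2)) := Real.exp_pos _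
      calc ‖f p z‖
          = (‖F p.1‖ * ‖F p.2‖) * (Real.exp (-(c*(p.1-z)^2)) * Real.exp (-(c*(p.2-z)^2))) :=
            hnormf p z
        _ ≤ (‖F p.1‖ * ‖F p.2‖) * Real.exp (-(c*(p.1-z)^2)) := by
            have hA : (0:ℝ) ≤ ‖F p.1‖ * ‖F p.2‖ * Real.exp (-(c*(p.1-z)^2)) := by positivity
            nlinarith [mul_nonneg hA (sub_nonneg.mpr he2)]
        _ ≤ ‖(‖F p.1‖ * ‖F p.2‖) * Real.exp (-(c*(p.1-z)^2))‖ := le_abs_self _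
    · have hkey : (fun p : ℝ×ℝ => ∫ z, ‖f p z‖)
          = fun p => (‖F p.1‖ * ‖F p.2‖) * (K * Real.exp (-(t * (p.1-p.2)^2))) := by
        funext p
        simp_rw [hnormf p]
        rw [integral_const_mul]
        congr 1
        -- reuse hzint with |F| replaced: the z-integral is the same
        exact hzint p.1 p.2
      simp only [Function.uncurry_apply_pair]
      rw [hkey]
      have hKFF : Integrable (fun p : ℝ×ℝ => K * (‖F p.1‖ * ‖F p.2‖))
          ((volume : Measure ℝ).prod volume) := (hF1.norm.mul_prod hF1.norm).const_mul K
      refine Integrable.mono hKFF ?_ ?_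
      · apply AEStronglyMeasurable.mul
        · exact ((hFc.norm.comp continuous_fst).mul
            (hFc.norm.comp continuous_snd)).aestronglyMeasurable
        · apply Continuous.aestronglyMeasurable
          apply continuous_const.mul
          apply Real.continuous_exp.comp
          exact (continuous_const.mul ((continuous_fst.sub continuous_snd).pow 2)).neg
      · filter_upwards with p
        have he : Real.exp (-(t * (p.1-p.2)^2)) ≤ 1 := Real.exp_le_one_iff.mpr (by
          have : (0:ℝ) ≤ t*(p.1-p.2)^2 := by positivity
          linarith)
        have he0 : 0 < Real.exp (-(t * (p.1-p.2)^2)) := Real.exp_pos _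
        calc ‖‖F p.1‖ * ‖F p.2‖ * (K * Real.exp (-(t * (p.1-p.2)^2)))‖
            = ‖F p.1‖ * ‖F p.2‖ * (K * Real.exp (-(t * (p.1-p.2)^2))) := by
              rw [Real.norm_eq_abs, abs_of_nonneg]
              have h1 : (0:ℝ) ≤ ‖F p.1‖ * ‖F p.2‖ := by positivity
              exact mul_nonneg h1 (mul_nonneg hK.le he0.le)
          _ ≤ K * (‖F p.1‖ * ‖F p.2‖) := by
              have h1 : (0:ℝ) ≤ ‖F p.1‖ * ‖F p.2‖ := by positivity
              nlinarith [mul_nonneg (mul_nonneg h1 hK.le) (sub_nonneg.mpr he)]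
          _ ≤ ‖K * (‖F p.1‖ * ‖F p.2‖)‖ := le_abs_self _
  have hswap := integral_integral_swap hfInt
  -- LHS of swap equals K * (our integral)
  have hLHS : (∫ p : ℝ×ℝ, ∫ z : ℝ, f p z ∂volume ∂((volume : Measure ℝ).prod volume))
      = K * ∫ p : ℝ×ℝ, F p.1 * F p.2 * Real.exp (-(t * (p.1 - p.2)^2))
          ∂((volume : Measure ℝ).prod volume) := by
    rw [← integral_const_mul]
    apply integral_congr_ae
    filter_upwards with p
    have h1 : ∀ z : ℝ, f p z = (F p.1 * F p.2) *
        (Real.exp (-(c*(p.1-z)^2)) * Real.exp (-(c*(p.2-z)^2))) := by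
      intro z; rw [hfdef]; ring
    simp_rw [h1]
    rw [integral_const_mul, hzint p.1 p.2]
    ring
  -- RHS of swap is nonnegative
  have hRHS : 0 ≤ ∫ z : ℝ, ∫ p : ℝ×ℝ, f p z ∂((volume : Measure ℝ).prod volume) ∂volume := by
    refine integral_nonneg fun z => ?_
    show (0:ℝ) ≤ ∫ p : ℝ×ℝ, f p z ∂((volume : Measure ℝ).prod volume)
    have h2 : (∫ p : ℝ×ℝ, f p z ∂((volume : Measure ℝ).prod volume))
        = (∫ x : ℝ, F x * Real.exp (-(c*(x-z)^2))) * (∫ y : ℝ, F y * Real.exp (-(c*(y-z)^2))) := by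
      have := integral_prod_mul (μ := (volume : Measure ℝ)) (ν := (volume : Measure ℝ))
        (fun x : ℝ => F x * Real.exp (-(c*(x-z)^2))) (fun y : ℝ => F y * Real.exp (-(c*(y-z)^2)))
      exact this
    rw [h2]
    exact mul_self_nonneg _
  have hfin : K * (∫ p : ℝ×ℝ, F p.1 * F p.2 * Real.exp (-(t * (p.1 - p.2)^2))
      ∂((volume : Measure ℝ).prod volume))
      = ∫ z : ℝ, ∫ p : ℝ×ℝ, f p z ∂((volume : Measure ℝ).prod volume) ∂volume := by
    rw [← hLHS, hswap]
  nlinarith [hRHS, hK, hfin]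

/-- Negativity of the logarithmic quadratic form on mean-zero Schwartz
functions: if `∫ F = 0` then `∫∫ F(χ)F(χ') log|χ−χ'| dχ dχ' ≤ 0`. -/
theorem log_quadratic_form_nonpos (F : SchwartzMap ℝ ℝ)
    (hmean : ∫ χ : ℝ, F χ = 0) :
    (∫ χ : ℝ, ∫ χ' : ℝ, F χ * F χ' * Real.log |χ - χ'|) ≤ 0 := by
  have hFc : Continuous F := F.continuous
  have hF1 : Integrable (fun x : ℝ => F x) := F.integrable
  have hA3 := schwartz_log_integrable F
  set Q : ℝ := ∫ p : ℝ×ℝ, F p.1 * F p.2 * Real.log |p.1 - p.2|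
    ∂((volume : Measure ℝ).prod volume) with hQdef
  have hiter : (∫ χ : ℝ, ∫ χ' : ℝ, F χ * F χ' * Real.log |χ - χ'|) = Q :=
    integral_integral (f := fun x y => F x * F y * Real.log |x - y|) hA3
  -- diagonal is null
  have hdiag : ((volume : Measure ℝ).prod volume) {p : ℝ×ℝ | p.1 = p.2} = 0 := by
    have hms : MeasurableSet {p : ℝ×ℝ | p.1 = p.2} :=
      measurableSet_eq_fun measurable_fst measurable_snd
    rw [Measure.prod_apply hms]
    have hsec : ∀ x : ℝ, (volume ((Prod.mk x) ⁻¹' {p : ℝ×ℝ | p.1 = p.2})) = 0 := by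
      intro x
      have : (Prod.mk x) ⁻¹' {p : ℝ×ℝ | p.1 = p.2} = {x} := by
        ext y; simp [eq_comm]
      rw [this]
      exact measure_singleton x
    simp [hsec]
  have hae : ∀ᵐ p ∂((volume : Measure ℝ).prod volume), p.1 ≠ p.2 := by
    rw [ae_iff]
    simp only [ne_eq, not_not]
    exact hdiag
  -- the Frullani integrand
  set Φ : (ℝ×ℝ) → ℝ → ℝ := fun p t =>
    F p.1 * F p.2 * ((Real.exp (-t) - Real.exp (-(t * (p.1-p.2)^2))) / t) with hPhidef
  have hPhimeas : AEStronglyMeasurable (Function.uncurry Φ)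
      (((volume : Measure ℝ).prod volume).prod (volume.restrict (Ioi 0))) := by
    apply Measurable.aestronglyMeasurable
    apply Measurable.mul
    · exact ((hFc.comp (continuous_fst.comp continuous_fst)).mul
        (hFc.comp (continuous_snd.comp continuous_fst))).measurable
    · apply Measurable.div
      · apply Measurable.sub
        · exact (Real.continuous_exp.comp continuous_snd.neg).measurable
        · apply (Real.continuous_exp.comp ?_).measurable
          exact (continuous_snd.mul ((((continuous_fst.comp continuous_fst)).sub
            (continuous_snd.comp continuous_fst)).pow 2)).neg
      · exact continuous_snd.measurable
  have hr_pos : ∀ p : ℝ×ℝ, p.1 ≠ p.2 → 0 < (p.1 - p.2)^2 := by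
    intro p hp
    have h0 : p.1 - p.2 ≠ 0 := sub_ne_zero.mpr hp
    exact lt_of_le_of_ne (sq_nonneg _) (Ne.symm (pow_ne_zero 2 h0))
  have hPhiInt : Integrable (Function.uncurry Φ)
      (((volume : Measure ℝ).prod volume).prod (volume.restrict (Ioi 0))) := by
    rw [integrable_prod_iff hPhimeas]
    constructor
    · filter_upwards [hae] with p hp
      exact ((frullani_log (hr_pos p hp)).1.const_mul (F p.1 * F p.2))
    · have h2 : Integrable (fun p : ℝ×ℝ => 2 * ‖F p.1 * F p.2 * Real.log |p.1 - p.2|‖)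
          ((volume : Measure ℝ).prod volume) := hA3.norm.const_mul 2
      apply h2.congr
      filter_upwards [hae] with p hp
      have hr := hr_pos p hp
      have hn : ∀ t : ℝ, ‖Function.uncurry Φ (p, t)‖
          = ‖F p.1 * F p.2‖ * ‖(Real.exp (-t) - Real.exp (-(t * (p.1-p.2)^2))) / t‖ := by
        intro t
        simp only [Function.uncurry_apply_pair, hPhidef, norm_mul]
      simp_rw [hn]
      rw [integral_const_mul, (frullani_log hr).2.2]
      have hlog : Real.log ((p.1 - p.2)^2) = 2 * Real.log |p.1 - p.2| := by
        rw [Real.log_pow, ← Real.log_abs]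
        norm_num
      rw [hlog]
      simp only [norm_mul, Real.norm_eq_abs]
      rw [abs_mul, abs_of_nonneg (by norm_num : (0:ℝ) ≤ 2)]
      ring
  have hswap := integral_integral_swap hPhiInt
  -- left side equals 2 * Q
  have hLHS : (∫ p : ℝ×ℝ, ∫ t in Ioi (0:ℝ), Φ p t ∂volume
      ∂((volume : Measure ℝ).prod volume)) = 2 * Q := by
    have hstep : (∫ p : ℝ×ℝ, ∫ t in Ioi (0:ℝ), Φ p t ∂volume
        ∂((volume : Measure ℝ).prod volume))
        = ∫ p : ℝ×ℝ, 2 * (F p.1 * F p.2 * Real.log |p.1 - p.2|)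
          ∂((volume : Measure ℝ).prod volume) := by
      apply integral_congr_ae
      filter_upwards [hae] with p hp
      have hr := hr_pos p hp
      rw [hPhidef]
      simp only
      rw [integral_const_mul, (frullani_log hr).2.1]
      have hlog : Real.log ((p.1 - p.2)^2) = 2 * Real.log |p.1 - p.2| := by
        rw [Real.log_pow, ← Real.log_abs]
        norm_num
      rw [hlog]
      ring
    rw [hstep, integral_const_mul, hQdef]
  -- right side is nonpositive
  have hRHS : (∫ t in Ioi (0:ℝ), (∫ p : ℝ×ℝ, Φ p t
      ∂((volume : Measure ℝ).prod volume)) ∂volume) ≤ 0 := by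
    apply integral_nonpos_of_ae
    rw [Filter.EventuallyLE, ae_restrict_iff' measurableSet_Ioi]
    filter_upwards with t ht
    have ht0 : (0:ℝ) < t := mem_Ioi.mp ht
    show (∫ p : ℝ×ℝ, Φ p t ∂((volume : Measure ℝ).prod volume)) ≤ 0
    have hI1 : Integrable (fun p : ℝ×ℝ => F p.1 * F p.2)
        ((volume : Measure ℝ).prod volume) := hF1.mul_prod hF1
    have hI2 : Integrable (fun p : ℝ×ℝ => F p.1 * F p.2 * Real.exp (-(t * (p.1-p.2)^2)))
        ((volume : Measure ℝ).prod volume) := by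
      refine Integrable.mono hI1.norm ?_ ?_
      · apply Continuous.aestronglyMeasurable
        apply Continuous.mul
        · exact (hFc.comp continuous_fst).mul (hFc.comp continuous_snd)
        · exact Real.continuous_exp.comp
            (continuous_const.mul ((continuous_fst.sub continuous_snd).pow 2)).neg
      · filter_upwards with p
        have he : Real.exp (-(t * (p.1-p.2)^2)) ≤ 1 := Real.exp_le_one_iff.mpr (by
          have : (0:ℝ) ≤ t * (p.1-p.2)^2 := by positivity
          linarith)
        have he0 : 0 < Real.exp (-(t * (p.1-p.2)^2)) := Real.exp_pos _
        rw [norm_mul, norm_norm]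
        calc ‖F p.1 * F p.2‖ * ‖Real.exp (-(t * (p.1-p.2)^2))‖
            = ‖F p.1 * F p.2‖ * Real.exp (-(t * (p.1-p.2)^2)) := by
              rw [Real.norm_eq_abs (Real.exp _), abs_of_pos he0]
          _ ≤ ‖F p.1 * F p.2‖ * 1 := mul_le_mul_of_nonneg_left he (norm_nonneg _)
          _ = ‖F p.1 * F p.2‖ := mul_one _
    have hsplit : ∀ p : ℝ×ℝ, Φ p t = (Real.exp (-t)/t) * (F p.1 * F p.2)
        - (1/t) * (F p.1 * F p.2 * Real.exp (-(t * (p.1-p.2)^2))) := by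
      intro p
      rw [hPhidef]
      simp only
      ring
    have hcalc : (∫ p : ℝ×ℝ, Φ p t ∂((volume : Measure ℝ).prod volume))
        = (Real.exp (-t)/t) * (∫ p : ℝ×ℝ, F p.1 * F p.2 ∂((volume : Measure ℝ).prod volume))
          - (1/t) * (∫ p : ℝ×ℝ, F p.1 * F p.2 * Real.exp (-(t * (p.1-p.2)^2))
            ∂((volume : Measure ℝ).prod volume)) := by
      rw [← integral_const_mul, ← integral_const_mul, ← integral_sub
        (hI1.const_mul _) (hI2.const_mul _)]
      apply integral_congr_ae
      filter_upwards with p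
      rw [hsplit p]
    rw [hcalc]
    have hzero : (∫ p : ℝ×ℝ, F p.1 * F p.2 ∂((volume : Measure ℝ).prod volume)) = 0 := by
      rw [integral_prod_mul (fun x : ℝ => F x) (fun y : ℝ => F y), hmean, mul_zero]
    rw [hzero, mul_zero, zero_sub, neg_nonpos]
    have hG := gauss_quad_nonneg F ht0
    positivity
  rw [hiter]
  have h2Q : 2 * Q ≤ 0 := by rw [← hLHS, hswap]; exact hRHS
  linarith
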